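/- Let Γ = (V,E) be a reduced finite simple graph and let π₁ ∈ Im(α). Then the subgraph of Γ induced by any orbit of π₁ on V is a coclique; that is, for every v ∈ V and every k ∈ ℤ, (v, π₁ᵏ(v)) ∉ E. -/

import Mathlib

open SimpleGraph

/-- A graph is reduced (vertex determining) if distinct vertices have distinct
open neighborhoods. -/
def Reduced {V : Type*} (G : SimpleGraph V) : Prop :=
  ∀ u v : V, G.neighborSet u = G.neighborSet v → u = v

/-- The group of two-fold projections of a graph: permutations mapping every
open neighborhood onto some open neighborhood. -/
def autPi {V : Type*} [Fintype V] (G : SimpleGraph V) : Subgroup (Equiv.Perm V) where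
  carrier := {π : Equiv.Perm V | ∀ v : V, ∃ w : V, π '' G.neighborSet v = G.neighborSet w}
  one_mem' := by
    intro v
    exact ⟨v, by simp⟩
  mul_mem' := by
    intro a b ha hb v
    obtain ⟨w, hw⟩ := hb v
    obtain ⟨u, hu⟩ := ha w
    refine ⟨u, ?_⟩
    rw [Equiv.Perm.coe_mul, Set.image_comp, hw, hu]
  inv_mem' := by
    intro a ha v
    have hfin : (Set.range G.neighborSet).Finite := Set.finite_range _
    have hmaps : Set.MapsTo (Set.image ⇑a) (Set.range G.neighborSet)
        (Set.range G.neighborSet) := by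
      rintro s ⟨u, rfl⟩
      obtain ⟨w, hw⟩ := ha u
      exact ⟨w, hw.symm⟩
    have hinj : Set.InjOn (Set.image ⇑a) (Set.range G.neighborSet) :=
      (Set.image_injective.mpr a.injective).injOn
    have hbij := (hfin.injOn_iff_bijOn_of_mapsTo hmaps).mp hinj
    obtain ⟨s, hs, hsv⟩ := hbij.surjOn ⟨v, rfl⟩
    obtain ⟨w, rfl⟩ := hs
    refine ⟨w, ?_⟩
    have : (⇑a⁻¹) '' ((⇑a) '' G.neighborSet w) = G.neighborSet w := by
      rw [← Set.image_comp]
      simp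
    rw [← this, hsv]

/-- For a reduced graph Γ and π₁ ∈ Im(α), the subgraph induced by any orbit of π₁
is a coclique: no vertex is adjacent to any of its images under integer powers of π₁. -/
theorem stmt_4 {V : Type*} [Fintype V] (G : SimpleGraph V) (hred : Reduced G)
    (γ : autPi G → autPi G)
    (hγ : ∀ (π : autPi G) (v : V),
      (π : Equiv.Perm V) '' G.neighborSet v = G.neighborSet ((γ π : Equiv.Perm V) v))
    (π₁ : autPi G) (hπ₁ : π₁ ∈ Set.range fun π : autPi G => π⁻¹ * γ π) :
    ∀ (v : V) (k : ℤ), ¬ G.Adj v (((π₁ ^ k : autPi G) : Equiv.Perm V) v) := by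
  obtain ⟨π, hπ⟩ := hπ₁
  set p : Equiv.Perm V := (π : Equiv.Perm V) with hp
  set s : Equiv.Perm V := ((γ π : autPi G) : Equiv.Perm V) with hs
  set q : Equiv.Perm V := ((π₁ : autPi G) : Equiv.Perm V) with hqdef
  have hq : q = p⁻¹ * s := by
    rw [hqdef, ← hπ]; rfl
  -- Rule A : v ~ w ↔ σ v ~ π w
  have ruleA : ∀ v w : V, G.Adj v w ↔ G.Adj (s v) (p w) := by
    intro v w
    have h := hγ π v
    constructor
    · intro hvw
      have : p w ∈ p '' G.neighborSet v := ⟨w, hvw, rfl⟩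
      rw [h] at this
      exact this
    · intro hsw
      have hmem : p w ∈ G.neighborSet (s v) := hsw
      rw [← h] at hmem
      obtain ⟨x, hx, hxe⟩ := hmem
      rwa [p.injective hxe] at hx
  -- Rule B : v ~ w ↔ π v ~ σ w (by symmetry of adjacency)
  have ruleB : ∀ v w : V, G.Adj v w ↔ G.Adj (p v) (s w) := by
    intro v w
    rw [G.adj_comm, ruleA w v, G.adj_comm]
  -- no vertex adjacent to its image under q = π⁻¹σ
  have h1 : ∀ v : V, ¬ G.Adj v (q v) := by
    intro v h
    rw [ruleA] at h
    have hpq : p (q v) = s v := by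
      rw [hq]; simp [Equiv.Perm.mul_apply]
    rw [hpq] at h
    exact G.irrefl h
  -- the shift rule : v ~ w ↔ q⁻¹ v ~ q w
  have hshift : ∀ v w : V, G.Adj v w ↔ G.Adj (q⁻¹ v) (q w) := by
    intro v w
    rw [ruleB v w, ruleA (q⁻¹ v) (q w)]
    have e1 : s (q⁻¹ v) = p v := by
      rw [hq]; simp [Equiv.Perm.mul_apply]
    have e2 : p (q w) = s w := by
      rw [hq]; simp [Equiv.Perm.mul_apply]
    rw [e1, e2]
  -- helpers for juggling integer powers
  have mulq : ∀ (a b : ℤ) (x : V), (q ^ (a + b)) x = (q ^ a) ((q ^ b) x) := by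
    intro a b x
    rw [zpow_add]
    rfl
  have stepq : ∀ (a : ℤ) (x : V), (q ^ (a + 1)) x = q ((q ^ a) x) := by
    intro a x
    rw [add_comm, mulq 1 a x, zpow_one]
  have stepq' : ∀ (a : ℤ) (x : V), (q ^ (a - 1)) x = q⁻¹ ((q ^ a) x) := by
    intro a x
    rw [show a - 1 = (-1) + a by ring, mulq (-1) a x, zpow_neg_one]
  -- iterated shift over the integers
  have hZ : ∀ (m : ℤ) (v w : V), G.Adj v w ↔ G.Adj ((q ^ (-m)) v) ((q ^ m) w) := by
    intro m
    induction m using Int.induction_on with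
    | zero => simp
    | succ n ih =>
        intro v w
        rw [show -((n : ℤ) + 1) = (-(n : ℤ)) - 1 by ring, stepq', stepq]
        exact (ih v w).trans (hshift _ _)
    | pred n ih =>
        intro v w
        rw [show -(-(n : ℤ) - 1) = (-(-(n : ℤ))) + 1 by ring, stepq,
          show -(n : ℤ) - 1 = (-(n : ℤ)) - 1 by ring, stepq']
        refine (ih v w).trans ?_
        rw [hshift (q ((q ^ (-(-(n : ℤ)))) v)) (q⁻¹ ((q ^ (-(n : ℤ))) w))]
        simp
  -- conclude
  intro v k h
  have hcast : ((π₁ ^ k : autPi G) : Equiv.Perm V) = q ^ k := by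
    rw [hqdef]; push_cast; rfl
  rw [hcast] at h
  rcases Int.even_or_odd k with ⟨m, hm⟩ | ⟨m, hm⟩
  · -- k = m + m : shift by -m to get a loop
    have h2 := (hZ (-m) v ((q ^ k) v)).mp h
    rw [neg_neg, ← mulq, show -m + k = m by omega] at h2
    exact G.irrefl h2
  · -- k = 2 * m + 1 : shift by -m to get an edge u ~ q u
    have h2 := (hZ (-m) v ((q ^ k) v)).mp h
    rw [neg_neg, ← mulq, show -m + k = m + 1 by omega, stepq] at h2
    exact h1 ((q ^ m) v) h2
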